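/- Let S be a minimum-makespan schedule of jobs with processing times p_1,…,p_n > 0 on m identical machines. Let f ≥ 1 be a real and k ≥ 0 an integer, and let p̂ satisfy p̂_j ≥ p_j for every j (augmentations only) such that the number of jobs with p̂_j > f·p_j is at most k. Then the schedule that keeps exactly the same job-to-machine assignment as S has makespan, measured with processing times p̂, at most (f + k)·C*_max(m, p̂). -/
import Mathlib


open Finset

/-- Completion time (load) of machine `i` under schedule `σ` and processing times `p`. -/
noncomputable def mLoad {n m : ℕ} (p : Fin n → ℝ) (σ : Fin n → Fin m) (i : Fin m) : ℝ :=
  ∑ j ∈ Finset.univ.filter (fun j => σ j = i), p j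

/-- Makespan of schedule `σ`: the maximum machine completion time. -/
noncomputable def makespan {n m : ℕ} (p : Fin n → ℝ) (σ : Fin n → Fin m) : ℝ :=
  ⨆ i, mLoad p σ i

/-- Minimum makespan of the jobs with processing times `p` on `m` machines. -/
noncomputable def optMakespan {n : ℕ} (m : ℕ) (p : Fin n → ℝ) : ℝ :=
  ⨅ σ : Fin n → Fin m, makespan p σ

/-- Type-2 (augmentations only) recovery guarantee: keeping a minimum-makespan
assignment after augmentations with at most `k` unstable jobs (augmented by a factor
exceeding `f`) yields makespan at most `(f + k)·C*_max(m, p̂)`. -/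
theorem stmt13 (n m : ℕ) (hm : 0 < m) (p : Fin n → ℝ) (hp : ∀ j, 0 < p j)
    (σ : Fin n → Fin m) (hσ : makespan p σ = optMakespan m p)
    (f : ℝ) (hf : 1 ≤ f) (k : ℕ)
    (phat : Fin n → ℝ) (h1 : ∀ j, p j ≤ phat j)
    (hunstable : (Finset.univ.filter (fun j => f * p j < phat j)).card ≤ k) :
    makespan phat σ ≤ (f + (k : ℝ)) * optMakespan m phat := by
  have hm' : Nonempty (Fin m) := ⟨⟨0, hm⟩⟩
  have hphat_pos : ∀ j, 0 < phat j := fun j => lt_of_lt_of_le (hp j) (h1 j)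
  have hf0 : 0 ≤ f := le_trans zero_le_one hf
  have hload_le_mk : ∀ (q : Fin n → ℝ) (τ : Fin n → Fin m) (i : Fin m),
      mLoad q τ i ≤ makespan q τ := fun q τ i =>
    le_ciSup (Set.finite_range _).bddAbove i
  have hmk_nonneg : ∀ (q : Fin n → ℝ), (∀ j, 0 ≤ q j) → ∀ τ : Fin n → Fin m,
      0 ≤ makespan q τ := by
    intro q hq τ
    exact le_trans (Finset.sum_nonneg fun j _ => hq j)
      (hload_le_mk q τ (Classical.arbitrary _))
  have hopt_nonneg : 0 ≤ optMakespan m phat :=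
    le_ciInf fun τ => hmk_nonneg phat (fun j => (hphat_pos j).le) τ
  have hjob_le_opt : ∀ j, phat j ≤ optMakespan m phat := by
    intro j
    apply le_ciInf; intro τ
    refine le_trans ?_ (hload_le_mk phat τ (τ j))
    unfold mLoad
    exact Finset.single_le_sum (fun j' _ => (hphat_pos j').le) (by simp)
  have hopt_mono : optMakespan m p ≤ optMakespan m phat := by
    apply le_ciInf; intro τ
    refine ciInf_le_of_le ⟨0, ?_⟩ τ ?_
    · rintro x ⟨τ', rfl⟩; exact hmk_nonneg p (fun j => (hp j).le) τ'
    · apply ciSup_le; intro i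
      refine le_trans ?_ (hload_le_mk phat τ i)
      exact Finset.sum_le_sum fun j _ => h1 j
  apply ciSup_le
  intro i
  set A := Finset.univ.filter (fun j => σ j = i) with hA
  have hsplit : mLoad phat σ i
      = ∑ j ∈ A.filter (fun j => f * p j < phat j), phat j
        + ∑ j ∈ A.filter (fun j => ¬ f * p j < phat j), phat j := by
    unfold mLoad
    rw [← hA, Finset.sum_filter_add_sum_filter_not]
  have hbound1 : ∑ j ∈ A.filter (fun j => f * p j < phat j), phat j
      ≤ (k : ℝ) * optMakespan m phat := by
    calc ∑ j ∈ A.filter (fun j => f * p j < phat j), phat j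
        ≤ ∑ _j ∈ A.filter (fun j => f * p j < phat j), optMakespan m phat :=
          Finset.sum_le_sum fun j _ => hjob_le_opt j
      _ = ((A.filter (fun j => f * p j < phat j)).card : ℝ) * optMakespan m phat := by
          rw [Finset.sum_const, nsmul_eq_mul]
      _ ≤ (k : ℝ) * optMakespan m phat := by
          refine mul_le_mul_of_nonneg_right ?_ hopt_nonneg
          have hsub : A.filter (fun j => f * p j < phat j)
              ⊆ Finset.univ.filter (fun j => f * p j < phat j) := by
            intro j hj
            simp only [Finset.mem_filter] at hj ⊢
            exact ⟨Finset.mem_univ j, hj.2⟩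
          exact_mod_cast le_trans (Finset.card_le_card hsub) hunstable
  have hbound2 : ∑ j ∈ A.filter (fun j => ¬ f * p j < phat j), phat j
      ≤ f * optMakespan m phat := by
    calc ∑ j ∈ A.filter (fun j => ¬ f * p j < phat j), phat j
        ≤ ∑ j ∈ A.filter (fun j => ¬ f * p j < phat j), f * p j := by
          refine Finset.sum_le_sum fun j hj => ?_
          simp only [Finset.mem_filter, not_lt] at hj
          exact hj.2
      _ ≤ ∑ j ∈ A, f * p j := by
          refine Finset.sum_le_sum_of_subset_of_nonneg (Finset.filter_subset _ _) ?_
          intro j _ _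
          exact mul_nonneg hf0 (hp j).le
      _ = f * mLoad p σ i := by rw [← Finset.mul_sum]; rfl
      _ ≤ f * optMakespan m phat := by
          refine mul_le_mul_of_nonneg_left ?_ hf0
          calc mLoad p σ i ≤ makespan p σ := hload_le_mk p σ i
            _ = optMakespan m p := hσ
            _ ≤ optMakespan m phat := hopt_mono
  calc mLoad phat σ i
      = _ := hsplit
    _ ≤ (k : ℝ) * optMakespan m phat + f * optMakespan m phat :=
        add_le_add hbound1 hbound2
    _ = (f + (k : ℝ)) * optMakespan m phat := by ring
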